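/- Fix distinct indices i, j, p, q in {1,…,ℓ} and an integer k with 2 < k < ℓ, k+1 ≤ ℓ. Let K be an ℓ×ℓ symmetric matrix such that every principal k×k submatrix of K is Einstein. Then K_{qi} − K_{pi} = K_{qj} − K_{pj}. -/

import Mathlib

open Matrix
open scoped BigOperators

lemma rowsum_eq {ℓ k : ℕ} (K : Matrix (Fin ℓ) (Fin ℓ) ℝ)
    (hEin : ∀ f : Fin k → Fin ℓ, Function.Injective f →
      ∀ a b : Fin k, ∑ t, K (f a) (f t) = ∑ t, K (f b) (f t))
    (S : Finset (Fin ℓ)) (hS : S.card = k) {x y : Fin ℓ}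
    (hx : x ∈ S) (hy : y ∈ S) :
    ∑ t ∈ S, K x t = ∑ t ∈ S, K y t := by
  set e := S.orderIsoOfFin hS with he
  set f : Fin k → Fin ℓ := fun t => (e t : Fin ℓ) with hf
  have hinj : Function.Injective f := by
    intro a b hab
    exact e.injective (Subtype.ext hab)
  have key := hEin f hinj (e.symm ⟨x, hx⟩) (e.symm ⟨y, hy⟩)
  have hfx : f (e.symm ⟨x, hx⟩) = x := by simp [hf]
  have hfy : f (e.symm ⟨y, hy⟩) = y := by simp [hf]
  rw [hfx, hfy] at key
  have hsum : ∀ z : Fin ℓ, ∑ t : Fin k, K z (f t) = ∑ t ∈ S, K z t := by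
    intro z
    rw [← Finset.sum_attach S (fun t => K z t)]
    exact Fintype.sum_equiv e.toEquiv _ _ (fun a => rfl)
  rw [hsum, hsum] at key
  exact key

theorem stmt_9 {ℓ k : ℕ} (hk : 2 < k) (hkl : k + 1 ≤ ℓ)
    (K : Matrix (Fin ℓ) (Fin ℓ) ℝ)
    (hsym : K.IsSymm) (hdiag : ∀ i, K i i = 0)
    (hEin : ∀ f : Fin k → Fin ℓ, Function.Injective f →
      ∀ a b : Fin k, ∑ t, K (f a) (f t) = ∑ t, K (f b) (f t))
    (i j p q : Fin ℓ)
    (hij : i ≠ j) (hip : i ≠ p) (hiq : i ≠ q)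
    (hjp : j ≠ p) (hjq : j ≠ q) (hpq : p ≠ q) :
    K q i - K p i = K q j - K p j := by
  classical
  -- choose A of size k - 3 avoiding i j p q
  have hcard4 : ({i, j, p, q} : Finset (Fin ℓ)).card = 4 := by
    rw [Finset.card_insert_of_notMem (by simp [hij, hip, hiq]),
        Finset.card_insert_of_notMem (by simp [hjp, hjq]),
        Finset.card_insert_of_notMem (by simp [hpq])]
    rfl
  have hbig : k - 3 ≤ (Finset.univ \ ({i, j, p, q} : Finset (Fin ℓ))).card := by
    rw [Finset.card_sdiff_of_subset (Finset.subset_univ _), hcard4, Finset.card_univ,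
      Fintype.card_fin]
    omega
  obtain ⟨A, hAsub, hAcard⟩ := Finset.exists_subset_card_eq hbig
  have hAx : ∀ x ∈ A, x ≠ i ∧ x ≠ j ∧ x ≠ p ∧ x ≠ q := by
    intro x hx
    have := hAsub hx
    simp only [Finset.mem_sdiff, Finset.mem_insert, Finset.mem_singleton] at this
    tauto
  have hiA : i ∉ A := fun h => (hAx i h).1 rfl
  have hjA : j ∉ A := fun h => (hAx j h).2.1 rfl
  have hpA : p ∉ A := fun h => (hAx p h).2.2.1 rfl
  have hqA : q ∉ A := fun h => (hAx q h).2.2.2 rfl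
  -- S1 = {i,j,p} ∪ A, S2 = {i,j,q} ∪ A
  set S1 : Finset (Fin ℓ) := insert i (insert j (insert p A)) with hS1
  set S2 : Finset (Fin ℓ) := insert i (insert j (insert q A)) with hS2
  have hS1card : S1.card = k := by
    rw [hS1, Finset.card_insert_of_notMem (by simp [hij, hip, hiA]),
        Finset.card_insert_of_notMem (by simp [hjp, hjA]),
        Finset.card_insert_of_notMem hpA, hAcard]
    omega
  have hS2card : S2.card = k := by
    rw [hS2, Finset.card_insert_of_notMem (by simp [hij, hiq, hiA]),
        Finset.card_insert_of_notMem (by simp [hjq, hjA]),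
        Finset.card_insert_of_notMem hqA, hAcard]
    omega
  have h1 := rowsum_eq K hEin S1 hS1card (x := i) (y := j) (by simp [hS1]) (by simp [hS1])
  have h2 := rowsum_eq K hEin S2 hS2card (x := i) (y := j) (by simp [hS2]) (by simp [hS2])
  have expand : ∀ (z w : Fin ℓ), i ≠ w → j ≠ w → w ∉ A →
      ∑ t ∈ insert i (insert j (insert w A)), K z t
      = K z i + K z j + K z w + ∑ t ∈ A, K z t := by
    intro z w hiw hjw hwA
    rw [Finset.sum_insert (by simp [hij, hiw, hiA]),
        Finset.sum_insert (by simp [hjw, hjA]),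
        Finset.sum_insert hwA]
    ring
  rw [expand i p hip hjp hpA, expand j p hip hjp hpA] at h1
  rw [expand i q hiq hjq hqA, expand j q hiq hjq hqA] at h2
  have sij : K i j = K j i := (hsym.apply j i)
  have sip : K i p = K p i := (hsym.apply p i)
  have siq : K i q = K q i := (hsym.apply q i)
  have sjp : K j p = K p j := (hsym.apply p j)
  have sjq : K j q = K q j := (hsym.apply q j)
  have di := hdiag i
  have dj := hdiag j
  linarith
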